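/- Let Ω, ∂Ω, σ, n be as in the context, and let u, v : ℝ^d → ℝ be C² on a neighborhood of the closure of Ω and satisfy −Δu = E_u·u and −Δv = E_v·v on Ω with E_u ≠ E_v. Set ε := E_u − E_v and 𝓔 := E_u + E_v. Then ∫_Ω ‖x‖²·u(x)·v(x) dx = (4/ε²)·∫_{∂Ω} [ ((d−2)/2)(⟨n(x),∇u(x)⟩v(x) + ⟨n(x),∇v(x)⟩u(x)) + (𝓔/ε − (ε/4)‖x‖²)(⟨n(x),∇u(x)⟩v(x) − ⟨n(x),∇v(x)⟩u(x)) + ⟨x,n(x)⟩((𝓔/2)u(x)v(x) − ⟨∇u(x),∇v(x)⟩) + ⟨x,∇u(x)⟩⟨n(x),∇v(x)⟩ + ⟨x,∇v(x)⟩⟨n(x),∇u(x)⟩ ] dσ(x). -/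

import Mathlib

open MeasureTheory
open scoped RealInnerProductSpace Classical

noncomputable section

/-- The Euclidean Laplacian: the sum of the second partial derivatives. -/
def lap {d : ℕ} (u : EuclideanSpace ℝ (Fin d) → ℝ) (x : EuclideanSpace ℝ (Fin d)) : ℝ :=
  ∑ i, fderiv ℝ (fun y => fderiv ℝ u y (EuclideanSpace.single i (1:ℝ))) x
    (EuclideanSpace.single i (1:ℝ))

/-- The divergence: the sum of the partial derivatives of the components. -/
def divg {d : ℕ} (F : EuclideanSpace ℝ (Fin d) → EuclideanSpace ℝ (Fin d))
    (x : EuclideanSpace ℝ (Fin d)) : ℝ :=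
  ∑ i, fderiv ℝ (fun y => ⟪F y, EuclideanSpace.single i (1:ℝ)⟫) x
    (EuclideanSpace.single i (1:ℝ))

open InnerProductSpace

variable {d : ℕ}
local notation "E" => EuclideanSpace ℝ (Fin d)

lemma grad_inner (f : E → ℝ) (x w : E) : ⟪gradient f x, w⟫ = fderiv ℝ f x w := by
  simp [gradient, InnerProductSpace.toDual_symm_apply]

lemma sum_single (w : E) : ∑ i, w i • EuclideanSpace.single i (1:ℝ) = w := by
  ext j
  rw [show ((∑ i, w i • EuclideanSpace.single i (1:ℝ)) j) = ∑ i, (w i • EuclideanSpace.single i (1:ℝ)) j from by rw [WithLp.ofLp_sum, Finset.sum_apply]]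
  simp [EuclideanSpace.single_apply]

lemma divg_grad (u : E → ℝ) (x : E) : divg (fun y => gradient u y) x = lap u x := by
  unfold divg lap
  refine Finset.sum_congr rfl fun i _ => ?_
  have h2 : (fun y => ⟪gradient u y, EuclideanSpace.single i (1:ℝ)⟫)
      = fun y => fderiv ℝ u y (EuclideanSpace.single i (1:ℝ)) :=
    funext fun y => grad_inner u y _
  rw [h2]

lemma divg_id (x : E) : divg (fun y : E => y) x = d := by
  have h : ∀ i : Fin d, fderiv ℝ (fun y : E => ⟪y, EuclideanSpace.single i (1:ℝ)⟫) x
      (EuclideanSpace.single i (1:ℝ)) = 1 := by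
    intro i
    have h2 : (fun y : E => ⟪y, EuclideanSpace.single i (1:ℝ)⟫)
        = (innerSL ℝ (EuclideanSpace.single i (1:ℝ)) : E →L[ℝ] ℝ) :=
      funext fun y => real_inner_comm _ _
    rw [h2, ContinuousLinearMap.fderiv]
    simp [real_inner_self_eq_norm_sq]
  unfold divg
  rw [Finset.sum_congr rfl fun i _ => h i]
  simp

lemma divg_add {F G : E → E} {x : E} (hF : DifferentiableAt ℝ F x)
    (hG : DifferentiableAt ℝ G x) :
    divg (fun y => F y + G y) x = divg F x + divg G x := by
  unfold divg
  rw [← Finset.sum_add_distrib]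
  refine Finset.sum_congr rfl fun i _ => ?_
  have h2 : (fun y => ⟪F y + G y, EuclideanSpace.single i (1:ℝ)⟫)
      = fun y => ⟪F y, EuclideanSpace.single i (1:ℝ)⟫ + ⟪G y, EuclideanSpace.single i (1:ℝ)⟫ :=
    funext fun y => inner_add_left _ _ _
  rw [h2, fderiv_fun_add (hF.inner ℝ (differentiableAt_const _)) (hG.inner ℝ (differentiableAt_const _))]
  simp

lemma divg_smul {c : E → ℝ} {G : E → E} {x : E} (hc : DifferentiableAt ℝ c x)
    (hG : DifferentiableAt ℝ G x) :
    divg (fun y => c y • G y) x = fderiv ℝ c x (G x) + c x * divg G x := by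
  unfold divg
  have h : ∀ i : Fin d, fderiv ℝ (fun y => ⟪c y • G y, EuclideanSpace.single i (1:ℝ)⟫) x
      (EuclideanSpace.single i (1:ℝ))
      = c x * fderiv ℝ (fun y => ⟪G y, EuclideanSpace.single i (1:ℝ)⟫) x (EuclideanSpace.single i (1:ℝ))
        + ⟪G x, EuclideanSpace.single i (1:ℝ)⟫ * fderiv ℝ c x (EuclideanSpace.single i (1:ℝ)) := by
    intro i
    have h2 : (fun y => ⟪c y • G y, EuclideanSpace.single i (1:ℝ)⟫)
        = fun y => c y * ⟪G y, EuclideanSpace.single i (1:ℝ)⟫ :=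
      funext fun y => real_inner_smul_left _ _ _
    rw [h2, fderiv_fun_mul hc (hG.inner ℝ (differentiableAt_const _))]
    simp [mul_comm]
  rw [Finset.sum_congr rfl fun i _ => h i, Finset.sum_add_distrib, ← Finset.mul_sum]
  have h3 : ∑ i, ⟪G x, EuclideanSpace.single i (1:ℝ)⟫ * fderiv ℝ c x (EuclideanSpace.single i (1:ℝ))
      = fderiv ℝ c x (G x) := by
    conv_rhs => rw [← sum_single (G x)]
    rw [map_sum]
    refine Finset.sum_congr rfl fun i _ => ?_
    rw [ContinuousLinearMap.map_smul]
    simp [EuclideanSpace.inner_single_right, mul_comm]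
  rw [h3]; ring

lemma contDiffOn_gradient {W : Set E} (hW : IsOpen W) {f : E → ℝ} (hf : ContDiffOn ℝ 2 f W) :
    ContDiffOn ℝ 1 (gradient f) W := by
  have h1 : ContDiffOn ℝ 1 (fderiv ℝ f) W := hf.fderiv_of_isOpen hW (by norm_num)
  exact ((toDual ℝ E).symm.contDiff).comp_contDiffOn h1

lemma fderiv_gradient_eq (f : E → ℝ) (x w : E) :
    fderiv ℝ (gradient f) x w = (toDual ℝ E).symm (fderiv ℝ (fderiv ℝ f) x w) := by
  have h : gradient f = (toDual ℝ E).symm ∘ (fderiv ℝ f) := rfl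
  rw [h, LinearIsometryEquiv.comp_fderiv]
  simp

lemma hess_symm {W : Set E} (hW : IsOpen W) {f : E → ℝ} (hf : ContDiffOn ℝ 2 f W) {x : E}
    (hx : x ∈ W) (a b : E) :
    ⟪a, fderiv ℝ (gradient f) x b⟫ = ⟪b, fderiv ℝ (gradient f) x a⟫ := by
  have hs := (hf.contDiffAt (hW.mem_nhds hx)).isSymmSndFDerivAt (by simp)
  have key : ∀ w z : E, ⟪z, (toDual ℝ E).symm (fderiv ℝ (fderiv ℝ f) x w)⟫
      = fderiv ℝ (fderiv ℝ f) x w z := fun w z => by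
    rw [real_inner_comm]; exact toDual_symm_apply
  rw [fderiv_gradient_eq, fderiv_gradient_eq, key, key]
  exact hs b a

lemma diffAt_of_contDiffOn {W : Set E} (hW : IsOpen W) {f : E → ℝ} (hf : ContDiffOn ℝ 2 f W)
    {x : E} (hx : x ∈ W) : DifferentiableAt ℝ f x :=
  ((hf.differentiableOn (by norm_num)).differentiableAt (hW.mem_nhds hx))

lemma diffAt_gradient {W : Set E} (hW : IsOpen W) {f : E → ℝ} (hf : ContDiffOn ℝ 2 f W)
    {x : E} (hx : x ∈ W) : DifferentiableAt ℝ (gradient f) x :=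
  (((contDiffOn_gradient hW hf).differentiableOn (by norm_num)).differentiableAt
    (hW.mem_nhds hx))

lemma fderiv_S {W : Set E} (hW : IsOpen W) {f : E → ℝ} (hf : ContDiffOn ℝ 2 f W) {x : E}
    (hx : x ∈ W) (a b c : ℝ) (w : E) :
    fderiv ℝ (fun y => a * ⟪y, gradient f y⟫ + b * f y + c * (⟪y, y⟫ * f y)) x w
    = a * (⟪x, fderiv ℝ (gradient f) x w⟫ + ⟪w, gradient f x⟫)
      + b * ⟪gradient f x, w⟫
      + c * (⟪x, x⟫ * ⟪gradient f x, w⟫ + (⟪x, w⟫ + ⟪w, x⟫) * f x) := by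
  have hfd := diffAt_of_contDiffOn hW hf hx
  have hgd := diffAt_gradient hW hf hx
  have h1 : DifferentiableAt ℝ (fun y : E => ⟪y, gradient f y⟫) x :=
    differentiableAt_fun_id.inner ℝ hgd
  have h2 : DifferentiableAt ℝ (fun y : E => ⟪y, y⟫) x :=
    differentiableAt_fun_id.inner ℝ differentiableAt_fun_id
  have e1 : fderiv ℝ (fun y : E => ⟪y, gradient f y⟫) x w
      = ⟪x, fderiv ℝ (gradient f) x w⟫ + ⟪w, gradient f x⟫ := by
    rw [fderiv_inner_apply ℝ differentiableAt_fun_id hgd w]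
    simp
  have e2 : fderiv ℝ (fun y : E => ⟪y, y⟫) x w = ⟪x, w⟫ + ⟪w, x⟫ := by
    rw [fderiv_inner_apply ℝ differentiableAt_fun_id differentiableAt_fun_id w]
    simp
  have e3 : fderiv ℝ f x w = ⟪gradient f x, w⟫ := (grad_inner f x w).symm
  rw [fderiv_fun_add ((h1.const_mul a).fun_add (hfd.const_mul b)) ((h2.fun_mul hfd).const_mul c),
    ContinuousLinearMap.add_apply,
    fderiv_fun_add (h1.const_mul a) (hfd.const_mul b), ContinuousLinearMap.add_apply,
    fderiv_const_mul h1 a, fderiv_const_mul hfd b, fderiv_const_mul (h2.fun_mul hfd) c,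
    ContinuousLinearMap.smul_apply, ContinuousLinearMap.smul_apply,
    ContinuousLinearMap.smul_apply, fderiv_fun_mul h2 hfd, ContinuousLinearMap.add_apply,
    ContinuousLinearMap.smul_apply, ContinuousLinearMap.smul_apply, e1, e2, e3]
  simp only [smul_eq_mul]
  ring

lemma fderiv_T {W : Set E} (hW : IsOpen W) {u v : E → ℝ} (hu : ContDiffOn ℝ 2 u W)
    (hv : ContDiffOn ℝ 2 v W) {x : E} (hx : x ∈ W) (a b : ℝ) (w : E) :
    fderiv ℝ (fun y => a * ⟪gradient u y, gradient v y⟫ + b * (u y * v y)) x w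
    = a * (⟪gradient u x, fderiv ℝ (gradient v) x w⟫ + ⟪fderiv ℝ (gradient u) x w, gradient v x⟫)
      + b * (u x * ⟪gradient v x, w⟫ + v x * ⟪gradient u x, w⟫) := by
  have hud := diffAt_of_contDiffOn hW hu hx
  have hvd := diffAt_of_contDiffOn hW hv hx
  have hgu := diffAt_gradient hW hu hx
  have hgv := diffAt_gradient hW hv hx
  have h1 : DifferentiableAt ℝ (fun y : E => ⟪gradient u y, gradient v y⟫) x := hgu.inner ℝ hgv
  have e1 : fderiv ℝ (fun y : E => ⟪gradient u y, gradient v y⟫) x w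
      = ⟪gradient u x, fderiv ℝ (gradient v) x w⟫ + ⟪fderiv ℝ (gradient u) x w, gradient v x⟫ :=
    fderiv_inner_apply ℝ hgu hgv w
  have e3 : fderiv ℝ u x w = ⟪gradient u x, w⟫ := (grad_inner u x w).symm
  have e4 : fderiv ℝ v x w = ⟪gradient v x, w⟫ := (grad_inner v x w).symm
  rw [fderiv_fun_add (h1.const_mul a) ((hud.fun_mul hvd).const_mul b), ContinuousLinearMap.add_apply,
    fderiv_const_mul h1 a, fderiv_const_mul (hud.fun_mul hvd) b,
    ContinuousLinearMap.smul_apply, ContinuousLinearMap.smul_apply,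
    fderiv_fun_mul hud hvd, ContinuousLinearMap.add_apply,
    ContinuousLinearMap.smul_apply, ContinuousLinearMap.smul_apply, e1, e3, e4]
  simp only [smul_eq_mul]

lemma divg_F {W : Set E} (hW : IsOpen W) {u v : E → ℝ} (hu : ContDiffOn ℝ 2 u W)
    (hv : ContDiffOn ℝ 2 v W) (a₁ b₁ c₁ a₂ b₂ c₂ a₃ b₃ : ℝ) {x : E} (hx : x ∈ W) :
    divg (fun y => (a₁ * ⟪y, gradient v y⟫ + b₁ * v y + c₁ * (⟪y, y⟫ * v y)) • gradient u y
        + ((a₂ * ⟪y, gradient u y⟫ + b₂ * u y + c₂ * (⟪y, y⟫ * u y)) • gradient v y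
        + (a₃ * ⟪gradient u y, gradient v y⟫ + b₃ * (u y * v y)) • y)) x
    = a₁ * (⟪gradient u x, fderiv ℝ (gradient v) x x⟫ + ⟪gradient u x, gradient v x⟫)
        + b₁ * ⟪gradient u x, gradient v x⟫
        + c₁ * (⟪x, x⟫ * ⟪gradient u x, gradient v x⟫ + 2 * ⟪x, gradient u x⟫ * v x)
      + (a₁ * ⟪x, gradient v x⟫ + b₁ * v x + c₁ * (⟪x, x⟫ * v x)) * lap u x
      + (a₂ * (⟪gradient v x, fderiv ℝ (gradient u) x x⟫ + ⟪gradient u x, gradient v x⟫)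
        + b₂ * ⟪gradient u x, gradient v x⟫
        + c₂ * (⟪x, x⟫ * ⟪gradient u x, gradient v x⟫ + 2 * ⟪x, gradient v x⟫ * u x))
      + (a₂ * ⟪x, gradient u x⟫ + b₂ * u x + c₂ * (⟪x, x⟫ * u x)) * lap v x
      + (a₃ * (⟪gradient u x, fderiv ℝ (gradient v) x x⟫
          + ⟪gradient v x, fderiv ℝ (gradient u) x x⟫)
        + b₃ * (u x * ⟪x, gradient v x⟫ + v x * ⟪x, gradient u x⟫))
      + (a₃ * ⟪gradient u x, gradient v x⟫ + b₃ * (u x * v x)) * d := by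
  have hud := diffAt_of_contDiffOn hW hu hx
  have hvd := diffAt_of_contDiffOn hW hv hx
  have hgu := diffAt_gradient hW hu hx
  have hgv := diffAt_gradient hW hv hx
  have hA₁ : DifferentiableAt ℝ
      (fun y : E => a₁ * ⟪y, gradient v y⟫ + b₁ * v y + c₁ * (⟪y, y⟫ * v y)) x :=
    (((differentiableAt_fun_id.inner ℝ hgv).const_mul a₁).add (hvd.const_mul b₁)).add
      (((differentiableAt_fun_id.inner ℝ differentiableAt_fun_id).mul hvd).const_mul c₁)
  have hA₂ : DifferentiableAt ℝ
      (fun y : E => a₂ * ⟪y, gradient u y⟫ + b₂ * u y + c₂ * (⟪y, y⟫ * u y)) x :=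
    (((differentiableAt_fun_id.inner ℝ hgu).const_mul a₂).add (hud.const_mul b₂)).add
      (((differentiableAt_fun_id.inner ℝ differentiableAt_fun_id).mul hud).const_mul c₂)
  have hA₃ : DifferentiableAt ℝ
      (fun y : E => a₃ * ⟪gradient u y, gradient v y⟫ + b₃ * (u y * v y)) x :=
    ((hgu.inner ℝ hgv).const_mul a₃).add ((hud.mul hvd).const_mul b₃)
  rw [divg_add (hA₁.fun_smul hgu) ((hA₂.fun_smul hgv).fun_add (hA₃.fun_smul differentiableAt_fun_id)),
    divg_add (hA₂.fun_smul hgv) (hA₃.fun_smul differentiableAt_fun_id),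
    divg_smul hA₁ hgu, divg_smul hA₂ hgv, divg_smul hA₃ differentiableAt_fun_id,
    divg_grad, divg_grad, divg_id,
    fderiv_S hW hv hx a₁ b₁ c₁ (gradient u x),
    fderiv_S hW hu hx a₂ b₂ c₂ (gradient v x),
    fderiv_T hW hu hv hx a₃ b₃ x,
    hess_symm hW hv hx x (gradient u x), hess_symm hW hu hx x (gradient v x)]
  rw [real_inner_comm (gradient v x) (gradient u x),
    real_inner_comm (gradient u x) x, real_inner_comm (gradient v x) x,
    real_inner_comm (fderiv ℝ (gradient u) x x) (gradient v x)]
  ring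


set_option maxHeartbeats 2000000 in
theorem boundary_identity_unequal_energies
    (d : ℕ) (hd : 2 ≤ d) (Ω : Set (EuclideanSpace ℝ (Fin d)))
    (hΩo : IsOpen Ω) (hΩb : Bornology.IsBounded Ω)
    (n : EuclideanSpace ℝ (Fin d) → EuclideanSpace ℝ (Fin d))
    (hGG : ∀ F : EuclideanSpace ℝ (Fin d) → EuclideanSpace ℝ (Fin d),
      (∃ U, IsOpen U ∧ closure Ω ⊆ U ∧ ContDiffOn ℝ 1 F U) →
      (∫ x in Ω, divg F x) = ∫ x in frontier Ω, ⟪F x, n x⟫ ∂(μH[(d:ℝ) - 1]))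
    (u v : EuclideanSpace ℝ (Fin d) → ℝ) (Eu Ev : ℝ) (hne : Eu ≠ Ev)
    (hur : ∃ U, IsOpen U ∧ closure Ω ⊆ U ∧ ContDiffOn ℝ 2 u U) (hvr : ∃ U, IsOpen U ∧ closure Ω ⊆ U ∧ ContDiffOn ℝ 2 v U)
    (hHu : ∀ x ∈ Ω, -lap u x = Eu * u x) (hHv : ∀ x ∈ Ω, -lap v x = Ev * v x) :
    (∫ x in Ω, ‖x‖ ^ 2 * u x * v x)
      = 4 / (Eu - Ev) ^ 2 *
        ∫ x in frontier Ω,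
          (((d : ℝ) - 2) / 2 * (⟪n x, gradient u x⟫ * v x + ⟪n x, gradient v x⟫ * u x)
            + ((Eu + Ev) / (Eu - Ev) - (Eu - Ev) / 4 * ‖x‖ ^ 2) *
                (⟪n x, gradient u x⟫ * v x - ⟪n x, gradient v x⟫ * u x)
            + ⟪x, n x⟫ * ((Eu + Ev) / 2 * u x * v x - ⟪gradient u x, gradient v x⟫)
            + ⟪x, gradient u x⟫ * ⟪n x, gradient v x⟫
            + ⟪x, gradient v x⟫ * ⟪n x, gradient u x⟫) ∂(μH[(d:ℝ) - 1]) := by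
  obtain ⟨Uu, hUuo, hUus, hu2⟩ := hur
  obtain ⟨Uv, hUvo, hUvs, hv2⟩ := hvr
  have hW : IsOpen (Uu ∩ Uv) := hUuo.inter hUvo
  have hWs : closure Ω ⊆ Uu ∩ Uv := Set.subset_inter hUus hUvs
  have hu : ContDiffOn ℝ 2 u (Uu ∩ Uv) := hu2.mono Set.inter_subset_left
  have hv : ContDiffOn ℝ 2 v (Uu ∩ Uv) := hv2.mono Set.inter_subset_right
  have hε : Eu - Ev ≠ 0 := sub_ne_zero.mpr hne
  set F : EuclideanSpace ℝ (Fin d) → EuclideanSpace ℝ (Fin d) := fun y =>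
    (4 / (Eu - Ev) ^ 2 * ⟪y, gradient v y⟫
        + 4 / (Eu - Ev) ^ 2 * (((d : ℝ) - 2) / 2 + (Eu + Ev) / (Eu - Ev)) * v y
        + -(1 / (Eu - Ev)) * (⟪y, y⟫ * v y)) • gradient u y
      + ((4 / (Eu - Ev) ^ 2 * ⟪y, gradient u y⟫
        + 4 / (Eu - Ev) ^ 2 * (((d : ℝ) - 2) / 2 - (Eu + Ev) / (Eu - Ev)) * u y
        + 1 / (Eu - Ev) * (⟪y, y⟫ * u y)) • gradient v y
      + (-(4 / (Eu - Ev) ^ 2) * ⟪gradient u y, gradient v y⟫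
        + 4 / (Eu - Ev) ^ 2 * (Eu + Ev) / 2 * (u y * v y)) • y) with hF
  have hgu1 : ContDiffOn ℝ 1 (gradient u) (Uu ∩ Uv) := contDiffOn_gradient hW hu
  have hgv1 : ContDiffOn ℝ 1 (gradient v) (Uu ∩ Uv) := contDiffOn_gradient hW hv
  have hu1 : ContDiffOn ℝ 1 u (Uu ∩ Uv) := hu.of_le one_le_two
  have hv1 : ContDiffOn ℝ 1 v (Uu ∩ Uv) := hv.of_le one_le_two
  have hid : ContDiffOn ℝ 1 (fun y : EuclideanSpace ℝ (Fin d) => y) (Uu ∩ Uv) := contDiffOn_id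
  have hFc : ContDiffOn ℝ 1 F (Uu ∩ Uv) := by
    refine ContDiffOn.add (ContDiffOn.fun_smul ?_ hgu1)
      (ContDiffOn.add (ContDiffOn.fun_smul ?_ hgv1) (ContDiffOn.fun_smul ?_ hid))
    · exact ((contDiffOn_const.mul (hid.inner ℝ hgv1)).add (contDiffOn_const.mul hv1)).add
        (contDiffOn_const.mul ((hid.inner ℝ hid).mul hv1))
    · exact ((contDiffOn_const.mul (hid.inner ℝ hgu1)).add (contDiffOn_const.mul hu1)).add
        (contDiffOn_const.mul ((hid.inner ℝ hid).mul hu1))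
    · exact (contDiffOn_const.mul (hgu1.inner ℝ hgv1)).add
        (contDiffOn_const.mul (hu1.mul hv1))
  have hGGF := hGG F ⟨Uu ∩ Uv, hW, hWs, hFc⟩
  have hdiv : ∀ x ∈ Ω, divg F x = ‖x‖ ^ 2 * u x * v x := by
    intro x hxΩ
    have hxW : x ∈ Uu ∩ Uv := hWs (subset_closure hxΩ)
    have hlu : lap u x = -(Eu * u x) := by have := hHu x hxΩ; linarith
    have hlv : lap v x = -(Ev * v x) := by have := hHv x hxΩ; linarith
    rw [hF]
    rw [divg_F hW hu hv _ _ _ _ _ _ _ _ hxW, hlu, hlv, real_inner_self_eq_norm_sq]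
    field_simp
    ring
  have hbd : ∀ x, ⟪F x, n x⟫ = 4 / (Eu - Ev) ^ 2 *
      (((d : ℝ) - 2) / 2 * (⟪n x, gradient u x⟫ * v x + ⟪n x, gradient v x⟫ * u x)
        + ((Eu + Ev) / (Eu - Ev) - (Eu - Ev) / 4 * ‖x‖ ^ 2) *
            (⟪n x, gradient u x⟫ * v x - ⟪n x, gradient v x⟫ * u x)
        + ⟪x, n x⟫ * ((Eu + Ev) / 2 * u x * v x - ⟪gradient u x, gradient v x⟫)
        + ⟪x, gradient u x⟫ * ⟪n x, gradient v x⟫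
        + ⟪x, gradient v x⟫ * ⟪n x, gradient u x⟫) := by
    intro x
    rw [hF]
    simp only [inner_add_left, real_inner_smul_left]
    rw [real_inner_comm (gradient u x) (n x), real_inner_comm (gradient v x) (n x),
      ← real_inner_self_eq_norm_sq]
    field_simp
    ring
  calc (∫ x in Ω, ‖x‖ ^ 2 * u x * v x) = ∫ x in Ω, divg F x :=
        (setIntegral_congr_fun hΩo.measurableSet fun x hx => (hdiv x hx).symm)
    _ = ∫ x in frontier Ω, ⟪F x, n x⟫ ∂(μH[(d:ℝ) - 1]) := hGGF
    _ = ∫ x in frontier Ω, (4 / (Eu - Ev) ^ 2 *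
          (((d : ℝ) - 2) / 2 * (⟪n x, gradient u x⟫ * v x + ⟪n x, gradient v x⟫ * u x)
            + ((Eu + Ev) / (Eu - Ev) - (Eu - Ev) / 4 * ‖x‖ ^ 2) *
                (⟪n x, gradient u x⟫ * v x - ⟪n x, gradient v x⟫ * u x)
            + ⟪x, n x⟫ * ((Eu + Ev) / 2 * u x * v x - ⟪gradient u x, gradient v x⟫)
            + ⟪x, gradient u x⟫ * ⟪n x, gradient v x⟫
            + ⟪x, gradient v x⟫ * ⟪n x, gradient u x⟫)) ∂(μH[(d:ℝ) - 1]) :=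
          integral_congr_ae (Filter.Eventually.of_forall fun x => hbd x)
    _ = _ := by rw [MeasureTheory.integral_const_mul]
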